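/- Kelvin's circulation theorem for a closed curve: under the hypotheses of Euler flow transport, for any C¹ closed curve η : [0,1] → ℝ^d, the circulation ∮ u(Qₜ(η(s)), t) · d/ds Qₜ(η(s)) ds is independent of t. -/

import Mathlib

open Matrix

open Set Metric Real Filter Topology intervalIntegral

section aux

variable {d : ℕ}

/-- If the difference quotients of `φ` near `s` are bounded by `C`, then so is the derivative. -/
lemma norm_deriv_le_of_quot {φ : ℝ → Fin d → ℝ} {s : ℝ} {v : Fin d → ℝ} {C r : ℝ} (hr : 0 < r)
    (h : HasDerivAt φ v s) (hC : ∀ σ, |σ - s| < r → ‖φ σ - φ s‖ ≤ C * |σ - s|) : ‖v‖ ≤ C := by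
  have hs := hasDerivAt_iff_tendsto_slope.1 h
  have hb : ∀ᶠ σ in 𝓝[≠] s, ‖slope φ s σ‖ ≤ C := by
    have hball : Metric.ball s r ∈ 𝓝 s := Metric.ball_mem_nhds _ hr
    filter_upwards [nhdsWithin_le_nhds hball, self_mem_nhdsWithin] with σ hσr hσne
    have hne : σ - s ≠ 0 := sub_ne_zero.2 hσne
    have habs : 0 < |σ - s| := abs_pos.2 hne
    have hd : |σ - s| < r := by simpa [Real.dist_eq] using hσr
    rw [slope_def_module, norm_smul, norm_inv, Real.norm_eq_abs]
    calc |σ - s|⁻¹ * ‖φ σ - φ s‖ ≤ |σ - s|⁻¹ * (C * |σ - s|) :=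
          mul_le_mul_of_nonneg_left (hC σ hd) (inv_nonneg.2 habs.le)
      _ = C := by field_simp
  exact le_of_tendsto hs.norm hb

/-- derivative of a dot product of two vector-valued functions of a real variable -/
lemma hasDerivAt_dotProduct {a b : ℝ → Fin d → ℝ} {a' b' : Fin d → ℝ} {s : ℝ}
    (ha : HasDerivAt a a' s) (hb : HasDerivAt b b' s) :
    HasDerivAt (fun σ => a σ ⬝ᵥ b σ) (a' ⬝ᵥ b s + a s ⬝ᵥ b') s := by
  have hcomp : ∀ (c : ℝ → Fin d → ℝ) (c' : Fin d → ℝ), HasDerivAt c c' s →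
      ∀ i : Fin d, HasDerivAt (fun σ => c σ i) (c' i) s := by
    intro c c' hc i
    exact (ContinuousLinearMap.proj (R := ℝ) (φ := fun _ : Fin d => ℝ) i).hasFDerivAt.comp_hasDerivAt
      s hc
  have : HasDerivAt (fun σ => ∑ i, a σ i * b σ i) (∑ i, (a' i * b s i + a s i * b' i)) s :=
    HasDerivAt.fun_sum fun i _ => (hcomp a a' ha i).mul (hcomp b b' hb i)
  simpa [dotProduct, Finset.sum_add_distrib] using this

lemma abs_dotProduct_le (x y : Fin d → ℝ) : |x ⬝ᵥ y| ≤ d * ‖x‖ * ‖y‖ := by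
  calc |x ⬝ᵥ y| ≤ ∑ i, |x i * y i| := Finset.abs_sum_le_sum_abs _ _
    _ ≤ ∑ _i : Fin d, ‖x‖ * ‖y‖ := by
        refine Finset.sum_le_sum fun i _ => ?_
        rw [abs_mul]
        have h1 : |x i| ≤ ‖x‖ := by simpa [Real.norm_eq_abs] using norm_le_pi_norm x i
        have h2 : |y i| ≤ ‖y‖ := by simpa [Real.norm_eq_abs] using norm_le_pi_norm y i
        exact mul_le_mul h1 h2 (abs_nonneg _) (le_trans (abs_nonneg _) h1)
    _ = d * ‖x‖ * ‖y‖ := by simp [Finset.sum_const, mul_assoc]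

/-- chain rule for a `C¹` function of space-time along a differentiable curve, splitting the
derivative into the space and time contributions. -/
lemma hasDerivAt_comp_curve {E : Type*} [NormedAddCommGroup E] [NormedSpace ℝ E]
    {F : ((Fin d → ℝ) × ℝ) → E} (hF : ContDiff ℝ 1 F)
    {γ : ℝ → Fin d → ℝ} {v : Fin d → ℝ} {t : ℝ} (hγ : HasDerivAt γ v t) :
    HasDerivAt (fun τ => F (γ τ, τ))
      (fderiv ℝ (fun y => F (y, t)) (γ t) v + deriv (fun τ => F (γ t, τ)) t) t := by
  have hFd : HasFDerivAt F (fderiv ℝ F (γ t, t)) (γ t, t) :=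
    (hF.differentiable one_ne_zero (γ t, t)).hasFDerivAt
  have hcurve : HasDerivAt (fun τ => (γ τ, τ)) (v, (1 : ℝ)) t := hγ.prodMk (hasDerivAt_id t)
  have hmain : HasDerivAt (fun τ => F (γ τ, τ)) (fderiv ℝ F (γ t, t) (v, (1 : ℝ))) t := by
    have := hFd.comp_hasDerivAt (f := fun τ => (γ τ, τ)) t hcurve
    exact this
  have hsl : HasFDerivAt (fun y => F (y, t))
      ((fderiv ℝ F (γ t, t)).comp ((ContinuousLinearMap.id ℝ (Fin d → ℝ)).prod 0)) (γ t) :=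
    hFd.comp (γ t) ((hasFDerivAt_id (γ t)).prodMk (hasFDerivAt_const t (γ t)))
  have htime : HasDerivAt (fun τ => F (γ t, τ)) (fderiv ℝ F (γ t, t) ((0 : Fin d → ℝ), (1 : ℝ))) t := by
    have := hFd.comp_hasDerivAt (f := fun τ => ((γ t : Fin d → ℝ), τ)) t
      ((hasDerivAt_const t (γ t)).prodMk (hasDerivAt_id t))
    exact this
  have h1 : fderiv ℝ (fun y => F (y, t)) (γ t) v = fderiv ℝ F (γ t, t) (v, (0 : ℝ)) := by
    rw [hsl.fderiv]; rfl
  have h2 : deriv (fun τ => F (γ t, τ)) t = fderiv ℝ F (γ t, t) ((0 : Fin d → ℝ), (1 : ℝ)) :=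
    htime.deriv
  rw [h1, h2, ← ContinuousLinearMap.map_add]
  simpa using hmain

/-- expansion of a spatial fderiv applied to a vector into partial derivatives -/
lemma fderiv_apply_eq_sum {g : (Fin d → ℝ) → ℝ} {x : Fin d → ℝ} (hg : DifferentiableAt ℝ g x)
    (v : Fin d → ℝ) :
    fderiv ℝ g x v = ∑ j, v j * fderiv ℝ g x (Pi.single j 1) := by
  have hv : v = ∑ j, v j • (Pi.single j (1 : ℝ) : Fin d → ℝ) := by
    ext i
    simp [Finset.sum_apply, Pi.single_apply]
  conv_lhs => rw [hv]
  rw [map_sum]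
  refine Finset.sum_congr rfl fun j _ => ?_
  rw [ContinuousLinearMap.map_smul]
  simp [smul_eq_mul]

/-- One-sided Grönwall estimate for two exact trajectories staying in a set. -/
lemma gron_fwd {v : ℝ → (Fin d → ℝ) → (Fin d → ℝ)} {L : NNReal} {K : Set (Fin d → ℝ)} {T : ℝ}
    (hv : ∀ t ∈ Icc (0:ℝ) T, LipschitzOnWith L (v t) K)
    {f g : ℝ → Fin d → ℝ}
    (hf : ∀ t, HasDerivAt f (v t (f t)) t) (hg : ∀ t, HasDerivAt g (v t (g t)) t)
    (hfK : ∀ t ∈ Icc (0:ℝ) T, f t ∈ K) (hgK : ∀ t ∈ Icc (0:ℝ) T, g t ∈ K) :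
    ∀ t ∈ Icc (0:ℝ) T, dist (f t) (g t) ≤ dist (f 0) (g 0) * exp (L * T) := by
  intro t ht
  have key := dist_le_of_trajectories_ODE_of_mem
    (v := fun τ x => v τ x)
    (s := fun τ => if τ ∈ Icc (0:ℝ) T then K else (∅ : Set (Fin d → ℝ)))
    (K := L) (a := 0) (b := T) (δ := dist (f 0) (g 0)) (f := f) (g := g)
    (fun τ _ => by
      show LipschitzOnWith L (v τ) (if τ ∈ Icc (0:ℝ) T then K else ∅)
      by_cases hτ : τ ∈ Icc (0:ℝ) T
      · rw [if_pos hτ]; exact hv τ hτ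
      · rw [if_neg hτ]; exact lipschitzOnWith_empty _ _)
    (fun τ _ => (hf τ).continuousAt.continuousWithinAt)
    (fun τ _ => (hf τ).hasDerivWithinAt)
    (fun τ hτ => by
      show f τ ∈ (if τ ∈ Icc (0:ℝ) T then K else ∅)
      rw [if_pos (Ico_subset_Icc_self hτ)]; exact hfK τ (Ico_subset_Icc_self hτ))
    (fun τ _ => (hg τ).continuousAt.continuousWithinAt)
    (fun τ _ => (hg τ).hasDerivWithinAt)
    (fun τ hτ => by
      show g τ ∈ (if τ ∈ Icc (0:ℝ) T then K else ∅)
      rw [if_pos (Ico_subset_Icc_self hτ)]; exact hgK τ (Ico_subset_Icc_self hτ))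
    le_rfl t ht
  rw [sub_zero] at key
  refine key.trans ?_
  exact mul_le_mul_of_nonneg_left (exp_le_exp.2 (mul_le_mul_of_nonneg_left ht.2 L.coe_nonneg))
    dist_nonneg

/-- Two-sided Grönwall estimate on `[-T, T]`. -/
lemma gron_sym {v : ℝ → (Fin d → ℝ) → (Fin d → ℝ)} {L : NNReal} {K : Set (Fin d → ℝ)} {T : ℝ}
    (hT : 0 ≤ T)
    (hv : ∀ t ∈ Icc (-T) T, LipschitzOnWith L (v t) K)
    {f g : ℝ → Fin d → ℝ}
    (hf : ∀ t, HasDerivAt f (v t (f t)) t) (hg : ∀ t, HasDerivAt g (v t (g t)) t)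
    (hfK : ∀ t ∈ Icc (-T) T, f t ∈ K) (hgK : ∀ t ∈ Icc (-T) T, g t ∈ K) :
    ∀ t ∈ Icc (-T) T, dist (f t) (g t) ≤ dist (f 0) (g 0) * exp (L * T) := by
  have hmem : ∀ τ ∈ Icc (0:ℝ) T, τ ∈ Icc (-T) T := fun τ hτ =>
    ⟨le_trans (neg_nonpos.2 hT) hτ.1, hτ.2⟩
  have hmemneg : ∀ τ ∈ Icc (0:ℝ) T, -τ ∈ Icc (-T) T := fun τ hτ =>
    ⟨neg_le_neg hτ.2, le_trans (neg_nonpos.2 hτ.1) hT⟩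
  intro t ht
  rcases le_or_gt 0 t with h0 | h0
  · exact gron_fwd (fun τ hτ => hv τ (hmem τ hτ)) hf hg (fun τ hτ => hfK τ (hmem τ hτ))
      (fun τ hτ => hgK τ (hmem τ hτ)) t ⟨h0, ht.2⟩
  · set v' : ℝ → (Fin d → ℝ) → (Fin d → ℝ) := fun τ x => -(v (-τ) x) with hv'def
    have hrev : ∀ (φ : ℝ → Fin d → ℝ), (∀ τ, HasDerivAt φ (v τ (φ τ)) τ) →
        ∀ τ, HasDerivAt (fun σ => φ (-σ)) (v' τ (φ (-τ))) τ := by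
      intro φ hφ τ
      have h1 : HasDerivAt (fun σ : ℝ => -σ) (-1) τ := (hasDerivAt_id τ).neg
      have := (hφ (-τ)).scomp τ h1
      simpa [hv'def, Function.comp_def] using this
    have hv2 : ∀ τ ∈ Icc (0:ℝ) T, LipschitzOnWith L (v' τ) K := by
      intro τ hτ x hx y hy
      have := hv (-τ) (hmemneg τ hτ) hx hy
      simpa [hv'def, edist_neg_neg] using this
    have := gron_fwd hv2 (hrev f hf) (hrev g hg)
      (fun τ hτ => hfK (-τ) (hmemneg τ hτ)) (fun τ hτ => hgK (-τ) (hmemneg τ hτ))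
      (-t) ⟨neg_nonneg.2 h0.le, by linarith [ht.1]⟩
    simpa using this

/-- Bootstrap: a trajectory starting close to a reference trajectory whose `1`-tube lies in the
set where the field is Lipschitz stays close (one-sided version). -/
lemma boot_fwd {v : ℝ → (Fin d → ℝ) → (Fin d → ℝ)} {L : NNReal} {K : Set (Fin d → ℝ)} {T : ℝ}
    (hT : 0 ≤ T)
    (hv : ∀ t ∈ Icc (0:ℝ) T, LipschitzOnWith L (v t) K)
    {f g : ℝ → Fin d → ℝ}
    (hf : ∀ t, HasDerivAt f (v t (f t)) t) (hg : ∀ t, HasDerivAt g (v t (g t)) t)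
    (htube : ∀ t ∈ Icc (0:ℝ) T, closedBall (g t) 1 ⊆ K)
    (hδ : dist (f 0) (g 0) * exp (L * T) ≤ 1/2) :
    ∀ t ∈ Icc (0:ℝ) T, dist (f t) (g t) ≤ dist (f 0) (g 0) * exp (L * T) := by
  have hcf : Continuous f :=
    continuous_iff_continuousAt.2 fun x => (hf x).differentiableAt.continuousAt
  have hcg : Continuous g :=
    continuous_iff_continuousAt.2 fun x => (hg x).differentiableAt.continuousAt
  have hcd : Continuous fun τ => dist (f τ) (g τ) := hcf.dist hcg
  have hD0 : 0 ≤ dist (f 0) (g 0) := dist_nonneg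
  have hexp1 : (1:ℝ) ≤ exp (↑L * T) := one_le_exp (by positivity)
  have hd0D : dist (f 0) (g 0) ≤ dist (f 0) (g 0) * exp (↑L * T) :=
    le_mul_of_one_le_right hD0 hexp1
  have key : ∀ x ∈ Icc (0:ℝ) T, (∀ τ ∈ Icc (0:ℝ) x, dist (f τ) (g τ) ≤ 1) →
      dist (f x) (g x) ≤ dist (f 0) (g 0) * exp (↑L * T) := by
    intro x hx hctl
    have hmemf : ∀ τ ∈ Icc (0:ℝ) x, f τ ∈ K := fun τ hτ =>
      htube τ ⟨hτ.1, hτ.2.trans hx.2⟩ (mem_closedBall.2 (hctl τ hτ))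
    have hmemg : ∀ τ ∈ Icc (0:ℝ) x, g τ ∈ K := fun τ hτ =>
      htube τ ⟨hτ.1, hτ.2.trans hx.2⟩ (mem_closedBall_self zero_le_one)
    have := gron_fwd (T := x) (fun τ hτ => hv τ ⟨hτ.1, hτ.2.trans hx.2⟩) hf hg hmemf hmemg x
      ⟨hx.1, le_rfl⟩
    refine this.trans ?_
    exact mul_le_mul_of_nonneg_left (exp_le_exp.2 (mul_le_mul_of_nonneg_left hx.2 L.coe_nonneg))
      hD0
  set S : Set ℝ := {x | ∀ τ ∈ Icc (0:ℝ) T, dist (f (min τ x)) (g (min τ x)) ≤ 1} with hS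
  have hSmem : ∀ x ∈ Icc (0:ℝ) T, x ∈ S → ∀ τ ∈ Icc (0:ℝ) x, dist (f τ) (g τ) ≤ 1 := by
    intro x hx hxS τ hτ
    have := hxS τ ⟨hτ.1, hτ.2.trans hx.2⟩
    rwa [min_eq_left hτ.2] at this
  have hSclosed : IsClosed S := by
    have : S = ⋂ τ ∈ Icc (0:ℝ) T, {x : ℝ | dist (f (min τ x)) (g (min τ x)) ≤ 1} := by
      ext x; simp [hS, mem_iInter]
    rw [this]
    refine isClosed_biInter fun τ _ => ?_
    exact isClosed_le ((hcd.comp (continuous_const.min continuous_id))) continuous_const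
  have hsub : Icc (0:ℝ) T ⊆ S := by
    apply IsClosed.Icc_subset_of_forall_exists_gt (hSclosed.inter isClosed_Icc)
    · intro τ hτ
      rw [min_eq_right hτ.1]
      exact (hd0D.trans hδ).trans (by norm_num)
    · rintro x ⟨hxS, hxI⟩ y hy
      have hxT : x ∈ Icc (0:ℝ) T := ⟨hxI.1, hxI.2.le⟩
      have hdx : dist (f x) (g x) ≤ dist (f 0) (g 0) * exp (↑L * T) :=
        key x hxT (hSmem x hxT hxS)
      have hlt : dist (f x) (g x) < 1 := lt_of_le_of_lt (hdx.trans hδ) (by norm_num)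
      have hev : ∀ᶠ τ in nhds x, dist (f τ) (g τ) < 1 :=
        hcd.continuousAt.eventually_lt continuousAt_const hlt
      obtain ⟨ε, hε, hball⟩ := Metric.eventually_nhds_iff.1 hev
      refine ⟨min y (min (x + ε/2) T), ?_, ?_, min_le_left _ _⟩
      · intro τ hτ
        set z := min y (min (x + ε/2) T) with hz
        have hzx : x < z := lt_min hy (lt_min (by linarith) hxI.2)
        rcases le_or_gt (min τ z) x with hle | hgt
        · have h0τ : 0 ≤ min τ z := le_min hτ.1 (hxI.1.trans hzx.le)
          have := hSmem x hxT hxS (min τ z) ⟨h0τ, hle⟩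
          exact this
        · apply le_of_lt
          apply hball
          rw [Real.dist_eq, abs_of_pos (sub_pos.2 hgt)]
          have h1 : min τ z ≤ x + ε/2 :=
            le_trans (min_le_right _ _) (le_trans (min_le_right _ _) (min_le_left _ _))
          linarith
      · exact lt_min hy (lt_min (by linarith) hxI.2)
  intro t ht
  exact key t ht (hSmem t ht (hsub ht))

/-- Two-sided bootstrap on `[-T, T]`. -/
lemma boot_sym {v : ℝ → (Fin d → ℝ) → (Fin d → ℝ)} {L : NNReal} {K : Set (Fin d → ℝ)} {T : ℝ}
    (hT : 0 ≤ T)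
    (hv : ∀ t ∈ Icc (-T) T, LipschitzOnWith L (v t) K)
    {f g : ℝ → Fin d → ℝ}
    (hf : ∀ t, HasDerivAt f (v t (f t)) t) (hg : ∀ t, HasDerivAt g (v t (g t)) t)
    (htube : ∀ t ∈ Icc (-T) T, closedBall (g t) 1 ⊆ K)
    (hδ : dist (f 0) (g 0) * exp (L * T) ≤ 1/2) :
    ∀ t ∈ Icc (-T) T, dist (f t) (g t) ≤ dist (f 0) (g 0) * exp (L * T) := by
  have hmem : ∀ τ ∈ Icc (0:ℝ) T, τ ∈ Icc (-T) T := fun τ hτ =>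
    ⟨le_trans (neg_nonpos.2 hT) hτ.1, hτ.2⟩
  have hmemneg : ∀ τ ∈ Icc (0:ℝ) T, -τ ∈ Icc (-T) T := fun τ hτ =>
    ⟨neg_le_neg hτ.2, le_trans (neg_nonpos.2 hτ.1) hT⟩
  intro t ht
  rcases le_or_gt 0 t with h0 | h0
  · exact boot_fwd hT (fun τ hτ => hv τ (hmem τ hτ)) hf hg
      (fun τ hτ => htube τ (hmem τ hτ)) hδ t ⟨h0, ht.2⟩
  · set v' : ℝ → (Fin d → ℝ) → (Fin d → ℝ) := fun τ x => -(v (-τ) x) with hv'def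
    have hrev : ∀ (φ : ℝ → Fin d → ℝ), (∀ τ, HasDerivAt φ (v τ (φ τ)) τ) →
        ∀ τ, HasDerivAt (fun σ => φ (-σ)) (v' τ (φ (-τ))) τ := by
      intro φ hφ τ
      have h1 : HasDerivAt (fun σ : ℝ => -σ) (-1) τ := (hasDerivAt_id τ).neg
      have := (hφ (-τ)).scomp τ h1
      simpa [hv'def, Function.comp_def] using this
    have hv2 : ∀ τ ∈ Icc (0:ℝ) T, LipschitzOnWith L (v' τ) K := by
      intro τ hτ x hx y hy
      have := hv (-τ) (hmemneg τ hτ) hx hy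
      simpa [hv'def, edist_neg_neg] using this
    have := boot_fwd hT hv2 (hrev f hf) (hrev g hg)
      (fun τ hτ => htube (-τ) (hmemneg τ hτ)) (by simpa using hδ)
      (-t) ⟨neg_nonneg.2 h0.le, by linarith [ht.1]⟩
    simpa using this

/-- the spatial slice of the fderiv of a jointly `C¹` function -/
lemma slice_fderiv_apply {E : Type*} [NormedAddCommGroup E] [NormedSpace ℝ E]
    {F : ((Fin d → ℝ) × ℝ) → E} (hF : ContDiff ℝ 1 F) (x : Fin d → ℝ) (t : ℝ) (v : Fin d → ℝ) :
    fderiv ℝ (fun y => F (y, t)) x v = fderiv ℝ F (x, t) (v, 0) := by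
  have hFd : HasFDerivAt F (fderiv ℝ F (x, t)) (x, t) := (hF.differentiable one_ne_zero _).hasFDerivAt
  have hsl : HasFDerivAt (fun y => F (y, t))
      ((fderiv ℝ F (x, t)).comp ((ContinuousLinearMap.id ℝ (Fin d → ℝ)).prod 0)) x :=
    hFd.comp x ((hasFDerivAt_id x).prodMk (hasFDerivAt_const t x))
  rw [hsl.fderiv]; rfl

lemma hasDerivAt_proj {c : ℝ → Fin d → ℝ} {c' : Fin d → ℝ} {s : ℝ}
    (h : HasDerivAt c c' s) (i : Fin d) : HasDerivAt (fun σ => c σ i) (c' i) s :=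
  (ContinuousLinearMap.proj (R := ℝ) (φ := fun _ : Fin d => ℝ) i).hasFDerivAt.comp_hasDerivAt s h

lemma fderiv_proj_apply {F : (Fin d → ℝ) → Fin d → ℝ} {x : Fin d → ℝ}
    (hF : DifferentiableAt ℝ F x) (i : Fin d) (v : Fin d → ℝ) :
    fderiv ℝ (fun z => F z i) x v = fderiv ℝ F x v i := by
  have h1 : HasFDerivAt (fun z => F z i)
      ((ContinuousLinearMap.proj (R := ℝ) (φ := fun _ : Fin d => ℝ) i).comp (fderiv ℝ F x)) x :=
    (ContinuousLinearMap.proj (R := ℝ) (φ := fun _ : Fin d => ℝ) i).hasFDerivAt.comp x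
      hF.hasFDerivAt
  rw [h1.fderiv]; rfl

lemma continuous_dot {a b : ℝ → Fin d → ℝ} (ha : Continuous a) (hb : Continuous b) :
    Continuous fun s => a s ⬝ᵥ b s := by
  simp only [dotProduct]
  exact continuous_finset_sum _ fun i _ =>
    ((continuous_apply i).comp ha).mul ((continuous_apply i).comp hb)

end aux

theorem kelvin_circulation (d : ℕ)
    (u : (Fin d → ℝ) → ℝ → Fin d → ℝ) (P : (Fin d → ℝ) → ℝ → ℝ)
    (hu : ContDiff ℝ 2 (fun p : (Fin d → ℝ) × ℝ => u p.1 p.2))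
    (hP : ContDiff ℝ 1 (fun p : (Fin d → ℝ) × ℝ => P p.1 p.2))
    (heuler : ∀ (y : Fin d → ℝ) (t : ℝ) (i : Fin d),
      deriv (fun s => u y s i) t
        + (∑ j, fderiv ℝ (fun z => u z t i) y (Pi.single j 1) * u y t j)
        + fderiv ℝ (fun z => P z t) y (Pi.single i 1) = 0)
    (Q : ℝ → (Fin d → ℝ) → Fin d → ℝ)
    (hQ0 : Q 0 = id)
    (hflow : ∀ (q : Fin d → ℝ) (t : ℝ), HasDerivAt (fun s => Q s q) (u (Q t q) t) t)
    (hQreg : ∀ t, ContDiff ℝ 1 (Q t))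
    (η : ℝ → Fin d → ℝ) (hη : ContDiff ℝ 1 η) (hclosed : η 0 = η 1) :
    ∀ t₁ t₂ : ℝ,
      (∫ s in (0:ℝ)..1, (u (Q t₁ (η s)) t₁) ⬝ᵥ deriv (fun σ => Q t₁ (η σ)) s)
        = ∫ s in (0:ℝ)..1, (u (Q t₂ (η s)) t₂) ⬝ᵥ deriv (fun σ => Q t₂ (η σ)) s := by
  intro t₁ t₂
  have hu1 : ContDiff ℝ 1 (fun p : (Fin d → ℝ) × ℝ => u p.1 p.2) := hu.of_le one_le_two
  have hQ0' : ∀ y, Q 0 y = y := fun y => congrFun hQ0 y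
  set w : ℝ → ℝ → Fin d → ℝ := fun t s => fderiv ℝ (Q t) (η s) (deriv η s) with hwdef
  set gP : ℝ → ℝ → Fin d → ℝ :=
    (fun t s => fun i => fderiv ℝ (fun z => P z t) (Q t (η s)) (Pi.single i 1)) with hgPdef
  set wf : ℝ → ℝ → Fin d → ℝ :=
    (fun t s => fderiv ℝ (fun z => u z t) (Q t (η s)) (w t s)) with hwfdef
  have hηd : ∀ s, HasDerivAt η (deriv η s) s := fun s =>
    (hη.differentiable one_ne_zero s).hasDerivAt
  have hw : ∀ t s, HasDerivAt (fun σ => Q t (η σ)) (w t s) s := fun t s =>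
    (((hQreg t).differentiable one_ne_zero (η s)).hasFDerivAt).comp_hasDerivAt s (hηd s)
  have hηc : Continuous η := hη.continuous
  have hcc : ∀ t, Continuous fun s => Q t (η s) := fun t => (hQreg t).continuous.comp hηc
  have hw_cont : ∀ t, Continuous (w t) := fun t =>
    (((hQreg t).continuous_fderiv one_ne_zero).comp hηc).clm_apply (hη.continuous_deriv le_rfl)
  have hu_slice : ∀ t, ContDiff ℝ 1 (fun z => u z t) := fun t =>
    hu1.comp (contDiff_id.prodMk contDiff_const)
  have hP_slice : ∀ t, ContDiff ℝ 1 (fun z => P z t) := fun t =>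
    hP.comp (contDiff_id.prodMk contDiff_const)
  have hfc_cont : ∀ t, Continuous fun s => u (Q t (η s)) t := fun t =>
    (hu_slice t).continuous.comp (hcc t)
  have hwf : ∀ t s, HasDerivAt (fun σ => u (Q t (η σ)) t) (wf t s) s := fun t s =>
    (((hu_slice t).differentiable one_ne_zero _).hasFDerivAt).comp_hasDerivAt s (hw t s)
  have hwf_cont : ∀ t, Continuous (wf t) := fun t =>
    ((((hu_slice t).continuous_fderiv one_ne_zero).comp (hcc t)).clm_apply (hw_cont t))
  have hgP_cont : ∀ t, Continuous (gP t) := fun t => continuous_pi fun i =>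
    ((((hP_slice t).continuous_fderiv one_ne_zero).comp (hcc t)).clm_apply continuous_const)
  have hct : ∀ q, Continuous fun τ => Q τ q := fun q =>
    continuous_iff_continuousAt.2 fun τ => (hflow q τ).differentiableAt.continuousAt
  have hgP_joint : ∀ t s, gP t s = fun i =>
      fderiv ℝ (fun p : (Fin d → ℝ) × ℝ => P p.1 p.2) (Q t (η s), t) (Pi.single i 1, 0) := by
    intro t s; funext i
    simp only [hgPdef]
    exact slice_fderiv_apply hP (Q t (η s)) t (Pi.single i 1)
  have hgP_t_cont : ∀ s, Continuous fun τ => gP τ s := by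
    intro s
    have hrw : (fun τ => gP τ s) = fun τ => (fun i =>
        fderiv ℝ (fun p : (Fin d → ℝ) × ℝ => P p.1 p.2) (Q τ (η s), τ) (Pi.single i 1, 0)) :=
      funext fun τ => hgP_joint τ s
    rw [hrw]
    refine continuous_pi fun i => ?_
    have h2 : Continuous fun τ =>
        fderiv ℝ (fun p : (Fin d → ℝ) × ℝ => P p.1 p.2) (Q τ (η s), τ) :=
      (hP.continuous_fderiv one_ne_zero).comp ((hct (η s)).prodMk continuous_id)
    exact h2.clm_apply continuous_const
  -- material derivative along trajectories
  have hmat : ∀ s t, HasDerivAt (fun τ => u (Q τ (η s)) τ) (-(gP t s)) t := by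
    intro s t
    have hcomp' : HasDerivAt (fun τ => u (Q τ (η s)) τ)
        (fderiv ℝ (fun y => u y t) (Q t (η s)) (u (Q t (η s)) t)
          + deriv (fun τ => u (Q t (η s)) τ) t) t :=
      hasDerivAt_comp_curve (F := fun p : (Fin d → ℝ) × ℝ => u p.1 p.2) hu1 (hflow (η s) t)
    have heq : fderiv ℝ (fun y => u y t) (Q t (η s)) (u (Q t (η s)) t)
        + deriv (fun τ => u (Q t (η s)) τ) t = -(gP t s) := by
      funext i
      have hdiff_vec : DifferentiableAt ℝ (fun y => u y t) (Q t (η s)) :=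
        (hu_slice t).differentiable one_ne_zero _
      have hdiff_i : DifferentiableAt ℝ (fun z => u z t i) (Q t (η s)) :=
        ((ContinuousLinearMap.proj (R := ℝ) (φ := fun _ : Fin d => ℝ) i).hasFDerivAt.comp
          (Q t (η s)) hdiff_vec.hasFDerivAt).differentiableAt
      have h1 : (fderiv ℝ (fun y => u y t) (Q t (η s)) (u (Q t (η s)) t)) i
          = fderiv ℝ (fun z => u z t i) (Q t (η s)) (u (Q t (η s)) t) :=
        (fderiv_proj_apply hdiff_vec i _).symm
      have h2 : fderiv ℝ (fun z => u z t i) (Q t (η s)) (u (Q t (η s)) t)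
          = ∑ j, u (Q t (η s)) t j * fderiv ℝ (fun z => u z t i) (Q t (η s)) (Pi.single j 1) :=
        fderiv_apply_eq_sum hdiff_i _
      have htdiff : DifferentiableAt ℝ (fun τ => u (Q t (η s)) τ) t :=
        ((hu1.differentiable one_ne_zero (Q t (η s), t)).comp t
          ((differentiableAt_const (Q t (η s))).prodMk differentiableAt_id))
      have h3 : deriv (fun τ => u (Q t (η s)) τ) t i = deriv (fun τ => u (Q t (η s)) τ i) t :=
        ((hasDerivAt_proj htdiff.hasDerivAt i).deriv).symm
      have heul := heuler (Q t (η s)) t i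
      have hsum : ∑ j, u (Q t (η s)) t j * fderiv ℝ (fun z => u z t i) (Q t (η s)) (Pi.single j 1)
          = ∑ j, fderiv ℝ (fun z => u z t i) (Q t (η s)) (Pi.single j 1) * u (Q t (η s)) t j :=
        Finset.sum_congr rfl fun j _ => mul_comm _ _
      simp only [Pi.add_apply, Pi.neg_apply, hgPdef]
      rw [h1, h2, h3, hsum]
      linarith [heul]
    rw [heq] at hcomp'
    exact hcomp'
  -- spatial derivative of the pressure along the curve
  have hP_sderiv : ∀ t s, HasDerivAt (fun σ => P (Q t (η σ)) t) (gP t s ⬝ᵥ w t s) s := by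
    intro t s
    have hPd : DifferentiableAt ℝ (fun z => P z t) (Q t (η s)) :=
      (hP_slice t).differentiable one_ne_zero _
    have h0 := hPd.hasFDerivAt.comp_hasDerivAt s (hw t s)
    have heq : fderiv ℝ (fun z => P z t) (Q t (η s)) (w t s) = gP t s ⬝ᵥ w t s := by
      rw [fderiv_apply_eq_sum hPd]
      simp only [hgPdef, dotProduct]
      exact Finset.sum_congr rfl fun j _ => mul_comm _ _
    rw [heq] at h0
    exact h0
  have hI1 : ∀ t, (∫ s in (0:ℝ)..1, gP t s ⬝ᵥ w t s) = 0 := by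
    intro t
    rw [intervalIntegral.integral_eq_sub_of_hasDerivAt (fun s _ => hP_sderiv t s)
      ((continuous_dot (hgP_cont t) (hw_cont t)).intervalIntegrable _ _)]
    rw [hclosed]
    simp
  have hI2 : ∀ t, (∫ s in (0:ℝ)..1, (u (Q t (η s)) t) ⬝ᵥ wf t s) = 0 := by
    intro t
    have hdd : ∀ s, HasDerivAt (fun σ => (u (Q t (η σ)) t) ⬝ᵥ (u (Q t (η σ)) t))
        (wf t s ⬝ᵥ (u (Q t (η s)) t) + (u (Q t (η s)) t) ⬝ᵥ wf t s) s := fun s =>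
      hasDerivAt_dotProduct (hwf t s) (hwf t s)
    have hc1 : Continuous fun s => wf t s ⬝ᵥ (u (Q t (η s)) t) :=
      continuous_dot (hwf_cont t) (hfc_cont t)
    have hc2 : Continuous fun s => (u (Q t (η s)) t) ⬝ᵥ wf t s :=
      continuous_dot (hfc_cont t) (hwf_cont t)
    have h0 := intervalIntegral.integral_eq_sub_of_hasDerivAt (a := (0:ℝ)) (b := (1:ℝ))
      (fun s _ => hdd s) ((hc1.add hc2).intervalIntegrable _ _)
    rw [hclosed] at h0
    rw [intervalIntegral.integral_add (hc1.intervalIntegrable _ _)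
      (hc2.intervalIntegrable _ _)] at h0
    have hcomm : (∫ s in (0:ℝ)..1, wf t s ⬝ᵥ (u (Q t (η s)) t))
        = ∫ s in (0:ℝ)..1, (u (Q t (η s)) t) ⬝ᵥ wf t s := by
      apply intervalIntegral.integral_congr
      intro s _
      exact dotProduct_comm _ _
    rw [hcomm, sub_self] at h0
    linarith
  have hI3 : ∀ t tt, (∫ s in (0:ℝ)..1, (u (Q t (η s)) t) ⬝ᵥ (w t s - w tt s))
      = - ∫ s in (0:ℝ)..1, wf t s ⬝ᵥ (Q t (η s) - Q tt (η s)) := by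
    intro t tt
    have hdd : ∀ s, HasDerivAt (fun σ => (u (Q t (η σ)) t) ⬝ᵥ (Q t (η σ) - Q tt (η σ)))
        (wf t s ⬝ᵥ (Q t (η s) - Q tt (η s)) + (u (Q t (η s)) t) ⬝ᵥ (w t s - w tt s)) s :=
      fun s => hasDerivAt_dotProduct (hwf t s) ((hw t s).sub (hw tt s))
    have hc1 : Continuous fun s => wf t s ⬝ᵥ (Q t (η s) - Q tt (η s)) :=
      continuous_dot (hwf_cont t) ((hcc t).sub (hcc tt))
    have hc2 : Continuous fun s => (u (Q t (η s)) t) ⬝ᵥ (w t s - w tt s) :=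
      continuous_dot (hfc_cont t) ((hw_cont t).sub (hw_cont tt))
    have h0 := intervalIntegral.integral_eq_sub_of_hasDerivAt (a := (0:ℝ)) (b := (1:ℝ))
      (fun s _ => hdd s) ((hc1.add hc2).intervalIntegrable _ _)
    rw [hclosed] at h0
    rw [intervalIntegral.integral_add (hc1.intervalIntegrable _ _)
      (hc2.intervalIntegrable _ _), sub_self] at h0
    linarith
  have hfc_tc : ∀ s, Continuous fun τ => u (Q τ (η s)) τ := fun s =>
    hu1.continuous.comp ((hct (η s)).prodMk continuous_id)
  have hT3 : ∀ s t tt, Q t (η s) - Q tt (η s) = ∫ τ in tt..t, u (Q τ (η s)) τ := by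
    intro s t tt
    rw [intervalIntegral.integral_eq_sub_of_hasDerivAt (fun τ _ => hflow (η s) τ)
      ((hfc_tc s).intervalIntegrable _ _)]
  have hT4 : ∀ s t tt, u (Q t (η s)) t - u (Q tt (η s)) tt = ∫ τ in tt..t, -(gP τ s) := by
    intro s t tt
    rw [intervalIntegral.integral_eq_sub_of_hasDerivAt (fun τ _ => hmat s τ)
      (((hgP_t_cont s).neg).intervalIntegrable _ _)]
  have hΦcongr : ∀ t, (∫ s in (0:ℝ)..1, (u (Q t (η s)) t) ⬝ᵥ deriv (fun σ => Q t (η σ)) s)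
      = ∫ s in (0:ℝ)..1, (u (Q t (η s)) t) ⬝ᵥ w t s := fun t =>
    intervalIntegral.integral_congr fun s _ => by rw [(hw t s).deriv]
  rw [hΦcongr t₁, hΦcongr t₂]
  have hkey : ∀ t₀, HasDerivAt (fun t => ∫ s in (0:ℝ)..1, (u (Q t (η s)) t) ⬝ᵥ w t s) 0 t₀ := by
    intro t₀
    set T : ℝ := |t₀| + 2 with hTdef
    have hT0 : (0:ℝ) ≤ T := by positivity
    have ht₀J : ∀ τ, |τ - t₀| ≤ 1 → τ ∈ Icc (-T) T := by
      intro τ hτ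
      rw [abs_le] at hτ
      have h1 := le_abs_self t₀
      have h2 := neg_abs_le t₀
      constructor <;> simp only [hTdef] <;> linarith
    have curve_pack : ∀ s₀ : ℝ, ∃ ε > 0, ∃ C, 0 ≤ C ∧
        ∃ K : Set (Fin d → ℝ),
        (∀ t ∈ Icc (-T) T, ∀ x ∈ K, ∀ y ∈ K, ‖u x t - u y t‖ ≤ C * ‖x - y‖) ∧
        (∀ s, |s - s₀| ≤ ε → ∀ t ∈ Icc (-T) T, Q t (η s) ∈ K) ∧
        (∀ s s', |s - s₀| ≤ ε → |s' - s₀| ≤ ε → ∀ t ∈ Icc (-T) T,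
          ‖Q t (η s) - Q t (η s')‖ ≤ C * |s - s'|) := by
      intro s₀
      set x₀ := η s₀ with hx₀def
      set γ : ℝ → Fin d → ℝ := fun τ => Q τ x₀ with hγdef
      have hγcont : Continuous γ := hct x₀
      have hΓ : IsCompact (γ '' Icc (-T) T) := isCompact_Icc.image hγcont
      set K₁ : Set (Fin d → ℝ) := cthickening 1 (γ '' Icc (-T) T) with hK₁def
      have hK₁comp : IsCompact K₁ := hΓ.cthickening
      obtain ⟨R, hR⟩ := hK₁comp.isBounded.subset_closedBall (0 : Fin d → ℝ)
      set Kc : Set (Fin d → ℝ) := closedBall (0 : Fin d → ℝ) R with hKcdef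
      have hK₁Kc : K₁ ⊆ Kc := hR
      have hKccomp : IsCompact Kc := isCompact_closedBall _ _
      have hKcconv : Convex ℝ Kc := convex_closedBall _ _
      have hDu : Continuous (fderiv ℝ (fun p : (Fin d → ℝ) × ℝ => u p.1 p.2)) :=
        hu.continuous_fderiv two_ne_zero
      obtain ⟨M₀, hM₀⟩ :=
        (hKccomp.prod (isCompact_Icc (a := -T) (b := T))).exists_bound_of_continuousOn
          hDu.continuousOn
      set M : ℝ := max M₀ 0 with hMdef
      have hM0 : (0:ℝ) ≤ M := le_max_right _ _
      have hM : ∀ p ∈ Kc ×ˢ Icc (-T) T,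
          ‖fderiv ℝ (fun p : (Fin d → ℝ) × ℝ => u p.1 p.2) p‖ ≤ M :=
        fun p hp => (hM₀ p hp).trans (le_max_left _ _)
      have hulip : ∀ t ∈ Icc (-T) T, ∀ x ∈ Kc, ∀ y ∈ Kc, ‖u x t - u y t‖ ≤ M * ‖x - y‖ := by
        intro t ht x hx y hy
        have hder : ∀ z ∈ Kc, HasFDerivWithinAt (fun z => u z t)
            ((fderiv ℝ (fun p : (Fin d → ℝ) × ℝ => u p.1 p.2) (z, t)).comp
              ((ContinuousLinearMap.id ℝ (Fin d → ℝ)).prod 0)) Kc z := by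
          intro z _
          exact (((hu1.differentiable one_ne_zero (z, t)).hasFDerivAt).comp (f := fun z : Fin d → ℝ => (z, t)) z
            ((hasFDerivAt_id z).prodMk (hasFDerivAt_const t z))).hasFDerivWithinAt
        have hbound : ∀ z ∈ Kc,
            ‖(fderiv ℝ (fun p : (Fin d → ℝ) × ℝ => u p.1 p.2) (z, t)).comp
              ((ContinuousLinearMap.id ℝ (Fin d → ℝ)).prod 0)‖ ≤ M := by
          intro z hz
          refine (ContinuousLinearMap.opNorm_comp_le _ _).trans ?_
          have h1 : ‖fderiv ℝ (fun p : (Fin d → ℝ) × ℝ => u p.1 p.2) (z, t)‖ ≤ M :=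
            hM (z, t) ⟨hz, ht⟩
          have h2 : ‖(ContinuousLinearMap.id ℝ (Fin d → ℝ)).prod
              (0 : (Fin d → ℝ) →L[ℝ] ℝ)‖ ≤ 1 := by
            refine ContinuousLinearMap.opNorm_le_bound _ zero_le_one fun v => ?_
            rw [one_mul]
            have hval : ((ContinuousLinearMap.id ℝ (Fin d → ℝ)).prod
                (0 : (Fin d → ℝ) →L[ℝ] ℝ)) v = (v, (0:ℝ)) := rfl
            rw [hval, Prod.norm_def]
            simp only [norm_zero]
            exact max_le le_rfl (norm_nonneg v)
          calc ‖fderiv ℝ (fun p : (Fin d → ℝ) × ℝ => u p.1 p.2) (z, t)‖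
              * ‖(ContinuousLinearMap.id ℝ (Fin d → ℝ)).prod (0 : (Fin d → ℝ) →L[ℝ] ℝ)‖
              ≤ M * 1 := mul_le_mul h1 h2 (norm_nonneg _) hM0
            _ = M := mul_one M
        exact Convex.norm_image_sub_le_of_norm_hasFDerivWithin_le hder hbound hKcconv hy hx
      set Lq : NNReal := M.toNNReal with hLqdef
      have hLqcoe : (Lq : ℝ) = M := Real.coe_toNNReal _ hM0
      have hvlip : ∀ t ∈ Icc (-T) T, LipschitzOnWith Lq (fun x => u x t) Kc := by
        intro t ht
        apply LipschitzOnWith.of_dist_le_mul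
        intro x hx y hy
        rw [dist_eq_norm, dist_eq_norm, hLqcoe]
        exact hulip t ht x hx y hy
      set δq : ℝ := (1/2) * exp (-(M * T)) with hδqdef
      have hδq0 : (0:ℝ) < δq := by positivity
      have hδq1 : δq * exp ((Lq : ℝ) * T) ≤ 1/2 := by
        rw [hδqdef, hLqcoe, mul_assoc, ← Real.exp_add, neg_add_cancel, Real.exp_zero, mul_one]
      have htube : ∀ τ ∈ Icc (-T) T, closedBall (γ τ) 1 ⊆ Kc := by
        intro τ hτ z hz
        refine hK₁Kc ?_
        exact mem_cthickening_of_dist_le z (γ τ) 1 _ (mem_image_of_mem γ hτ) (mem_closedBall.1 hz)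
      obtain ⟨ε₀, hε₀pos, hηnear⟩ : ∃ ε₀ > 0, ∀ s, |s - s₀| ≤ ε₀ → ‖η s - η s₀‖ ≤ δq := by
        obtain ⟨δ', hδ', h'⟩ := Metric.continuousAt_iff.1 hηc.continuousAt δq hδq0
        refine ⟨δ'/2, by positivity, fun s hs => ?_⟩
        have hd : dist s s₀ < δ' := by rw [Real.dist_eq]; linarith
        have := h' hd
        rw [dist_eq_norm] at this
        exact this.le
      obtain ⟨Lη, hLη0, hηlip⟩ : ∃ Lη, 0 ≤ Lη ∧ ∀ s s', |s - s₀| ≤ 1 → |s' - s₀| ≤ 1 →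
          ‖η s - η s'‖ ≤ Lη * |s - s'| := by
        obtain ⟨Lη₀, hLη₀⟩ :=
          (isCompact_Icc (a := s₀ - 1) (b := s₀ + 1)).exists_bound_of_continuousOn
            (hη.continuous_deriv le_rfl).continuousOn
        refine ⟨max Lη₀ 0, le_max_right _ _, ?_⟩
        intro s s' hs hs'
        have hmem1 : s' ∈ Icc (s₀ - 1) (s₀ + 1) := by
          rw [abs_le] at hs'; constructor <;> linarith [hs'.1, hs'.2]
        have hmem2 : s ∈ Icc (s₀ - 1) (s₀ + 1) := by
          rw [abs_le] at hs; constructor <;> linarith [hs.1, hs.2]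
        have := Convex.norm_image_sub_le_of_norm_hasDerivWithin_le
          (f := η) (f' := deriv η) (C := max Lη₀ 0) (s := Icc (s₀ - 1) (s₀ + 1))
          (fun x _ => (hηd x).hasDerivWithinAt)
          (fun x hx => (hLη₀ x hx).trans (le_max_left _ _)) (convex_Icc _ _) hmem1 hmem2
        simpa [Real.norm_eq_abs] using this
      set ε : ℝ := min ε₀ 1 with hεdef
      have hstay : ∀ s, |s - s₀| ≤ ε → ∀ τ ∈ Icc (-T) T,
          Q τ (η s) ∈ Kc ∧ dist (Q τ (η s)) (γ τ) ≤ 1/2 := by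
        intro s hsε τ hτ
        have hs0 : ‖η s - η s₀‖ ≤ δq := hηnear s (hsε.trans (min_le_left _ _))
        have hstart : dist (Q 0 (η s)) (γ 0) * exp ((Lq : ℝ) * T) ≤ 1/2 := by
          have hd0 : dist (Q 0 (η s)) (γ 0) ≤ δq := by
            rw [hγdef]
            simp only [hQ0']
            rw [dist_eq_norm]
            exact hs0
          calc dist (Q 0 (η s)) (γ 0) * exp ((Lq : ℝ) * T)
              ≤ δq * exp ((Lq : ℝ) * T) :=
                mul_le_mul_of_nonneg_right hd0 (exp_nonneg _)
            _ ≤ 1/2 := hδq1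
        have hboot := boot_sym hT0 hvlip (f := fun τ => Q τ (η s)) (g := γ)
          (fun τ' => hflow (η s) τ') (fun τ' => hflow x₀ τ') htube hstart τ hτ
        have hd12 : dist (Q τ (η s)) (γ τ) ≤ 1/2 := hboot.trans hstart
        refine ⟨htube τ hτ (mem_closedBall.2 (hd12.trans (by norm_num))), hd12⟩
      have hpair : ∀ s s', |s - s₀| ≤ ε → |s' - s₀| ≤ ε → ∀ τ ∈ Icc (-T) T,
          ‖Q τ (η s) - Q τ (η s')‖ ≤ (exp (M * T) * Lη) * |s - s'| := by
        intro s s' hs hs' τ hτ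
        have hg := gron_sym hT0 hvlip (f := fun τ => Q τ (η s)) (g := fun τ => Q τ (η s'))
          (fun τ' => hflow (η s) τ') (fun τ' => hflow (η s') τ')
          (fun τ' hτ' => (hstay s hs τ' hτ').1) (fun τ' hτ' => (hstay s' hs' τ' hτ').1) τ hτ
        have hd0 : dist (Q 0 (η s)) (Q 0 (η s')) = ‖η s - η s'‖ := by
          simp only [hQ0']
          exact dist_eq_norm _ _
        rw [hd0, hLqcoe] at hg
        rw [← dist_eq_norm]
        calc dist (Q τ (η s)) (Q τ (η s')) ≤ ‖η s - η s'‖ * exp (M * T) := hg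
          _ ≤ (Lη * |s - s'|) * exp (M * T) :=
              mul_le_mul_of_nonneg_right
                (hηlip s s' (hs.trans (min_le_right _ _)) (hs'.trans (min_le_right _ _)))
                (exp_nonneg _)
          _ = (exp (M * T) * Lη) * |s - s'| := by ring
      refine ⟨ε, lt_min hε₀pos one_pos, max M (exp (M * T) * Lη),
        hM0.trans (le_max_left _ _), Kc, ?_, ?_, ?_⟩
      · intro t ht x hx y hy
        exact (hulip t ht x hx y hy).trans
          (mul_le_mul_of_nonneg_right (le_max_left _ _) (norm_nonneg _))
      · intro s hs t ht
        exact (hstay s hs t ht).1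
      · intro s s' hs hs' t ht
        exact (hpair s s' hs hs' t ht).trans
          (mul_le_mul_of_nonneg_right (le_max_right _ _) (abs_nonneg _))
    choose! ε hε C hC K hKlip hKstay hKpair using curve_pack
    obtain ⟨F, hFsub, hFfin, hFcov⟩ := isCompact_Icc.elim_finite_subcover_image
      (b := Icc (0:ℝ) 1) (c := fun s₀ => ball s₀ (ε s₀))
      (fun s₀ _ => isOpen_ball)
      (fun s hs => mem_biUnion hs (mem_ball_self (hε s)))
    obtain ⟨bb, hbb⟩ := (hFfin.image fun s₀ => C s₀ * C s₀).bddAbove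
    set C₂ : ℝ := max bb 0 with hC₂def
    have hC₂0 : (0:ℝ) ≤ C₂ := le_max_right _ _
    have hwf_bound : ∀ t ∈ Icc (-T) T, ∀ s ∈ Icc (0:ℝ) 1, ‖wf t s‖ ≤ C₂ := by
      intro t ht s hs
      obtain ⟨s₀, hs₀F, hs₀ball⟩ : ∃ s₀ ∈ F, s ∈ ball s₀ (ε s₀) := by
        have := hFcov hs; simpa using this
      have hsb : |s - s₀| < ε s₀ := by simpa [Real.dist_eq] using hs₀ball
      have hr0 : (0:ℝ) < ε s₀ - |s - s₀| := by linarith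
      have hquot : ∀ σ, |σ - s| < ε s₀ - |s - s₀| →
          ‖u (Q t (η σ)) t - u (Q t (η s)) t‖ ≤ (C s₀ * C s₀) * |σ - s| := by
        intro σ hσ
        have hσ0 : |σ - s₀| ≤ ε s₀ := by
          calc |σ - s₀| ≤ |σ - s| + |s - s₀| := abs_sub_le σ s s₀
            _ ≤ ε s₀ := by linarith
        have hs0 : |s - s₀| ≤ ε s₀ := hsb.le
        have hmem1 := hKstay s₀ σ hσ0 t ht
        have hmem2 := hKstay s₀ s hs0 t ht
        have hlip := hKlip s₀ t ht _ hmem1 _ hmem2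
        have hpr := hKpair s₀ σ s hσ0 hs0 t ht
        calc ‖u (Q t (η σ)) t - u (Q t (η s)) t‖ ≤ C s₀ * ‖Q t (η σ) - Q t (η s)‖ := hlip
          _ ≤ C s₀ * (C s₀ * |σ - s|) := mul_le_mul_of_nonneg_left hpr (hC s₀)
          _ = (C s₀ * C s₀) * |σ - s| := by ring
      exact (norm_deriv_le_of_quot hr0 (hwf t s) hquot).trans
        ((hbb (mem_image_of_mem _ hs₀F)).trans (le_max_left _ _))
    obtain ⟨Cw0, hCw0⟩ := (isCompact_Icc (a := (0:ℝ)) (b := 1)).exists_bound_of_continuousOn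
      (hw_cont t₀).continuousOn
    set Cw : ℝ := max Cw0 0 with hCwdef
    have hCw : ∀ s ∈ Icc (0:ℝ) 1, ‖w t₀ s‖ ≤ Cw := fun s hs =>
      (hCw0 s hs).trans (le_max_left _ _)
    have hCwpos : (0:ℝ) ≤ Cw := le_max_right _ _
    have hcF : ContinuousOn (fun p : ℝ × ℝ => Q p.1 (η p.2)) (Icc (-T) T ×ˢ Icc (0:ℝ) 1) := by
      rintro ⟨t, s⟩ ⟨htJ', _⟩
      rw [Metric.continuousWithinAt_iff]
      intro ε' hε'
      obtain ⟨δ₁, hδ₁, h₁⟩ := Metric.continuousAt_iff.1 (hct (η s)).continuousAt (ε'/2)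
        (by positivity)
      have hc1 : (0:ℝ) < C s + 1 := by linarith [hC s]
      set δ₂ : ℝ := min (ε s) (ε' / (2 * (C s + 1))) with hδ₂def
      have hδ₂0 : (0:ℝ) < δ₂ := lt_min (hε s) (by positivity)
      refine ⟨min δ₁ δ₂, lt_min hδ₁ hδ₂0, ?_⟩
      rintro ⟨τ, σ⟩ ⟨hτJ, _⟩ hdist
      rw [Prod.dist_eq] at hdist
      have hdτ : dist τ t < δ₁ :=
        lt_of_le_of_lt (le_max_left _ _) (lt_of_lt_of_le hdist (min_le_left _ _))
      have hdσ : dist σ s < δ₂ :=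
        lt_of_le_of_lt (le_max_right _ _) (lt_of_lt_of_le hdist (min_le_right _ _))
      have hσs : |σ - s| ≤ ε s := by
        rw [Real.dist_eq] at hdσ
        exact hdσ.le.trans (min_le_left _ _)
      have hss : |s - s| ≤ ε s := by simp [le_of_lt (hε s)]
      have hp1 : ‖Q τ (η σ) - Q τ (η s)‖ ≤ C s * |σ - s| := hKpair s σ s hσs hss τ hτJ
      have hp2 : C s * |σ - s| < ε' / 2 := by
        have h3 : |σ - s| ≤ ε' / (2 * (C s + 1)) := by
          rw [Real.dist_eq] at hdσ
          exact hdσ.le.trans (min_le_right _ _)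
        have h4 : C s * |σ - s| ≤ C s * (ε' / (2 * (C s + 1))) :=
          mul_le_mul_of_nonneg_left h3 (hC s)
        refine lt_of_le_of_lt h4 ?_
        rw [mul_div_assoc']
        rw [div_lt_div_iff₀ (by positivity) (by norm_num : (0:ℝ) < 2)]
        nlinarith [hε', hC s]
      have hp3 : dist (Q τ (η s)) (Q t (η s)) < ε' / 2 := h₁ hdτ
      calc dist (Q τ (η σ)) (Q t (η s))
          ≤ dist (Q τ (η σ)) (Q τ (η s)) + dist (Q τ (η s)) (Q t (η s)) := dist_triangle _ _ _
        _ < ε' / 2 + ε' / 2 := by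
            refine add_lt_add ?_ hp3
            rw [dist_eq_norm]
            exact lt_of_le_of_lt hp1 hp2
        _ = ε' := by ring
    have hRcomp : IsCompact (Icc (-T) T ×ˢ Icc (0:ℝ) 1) := isCompact_Icc.prod isCompact_Icc
    have hfcJ : ContinuousOn (fun p : ℝ × ℝ => u (Q p.1 (η p.2)) p.1)
        (Icc (-T) T ×ˢ Icc (0:ℝ) 1) :=
      hu1.continuous.comp_continuousOn (hcF.prodMk continuousOn_fst)
    have hgPJ : ContinuousOn (fun p : ℝ × ℝ => gP p.1 p.2) (Icc (-T) T ×ˢ Icc (0:ℝ) 1) := by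
      have hrw : (fun p : ℝ × ℝ => gP p.1 p.2) = fun p : ℝ × ℝ => (fun i =>
          fderiv ℝ (fun q : (Fin d → ℝ) × ℝ => P q.1 q.2) (Q p.1 (η p.2), p.1)
            (Pi.single i 1, 0)) :=
        funext fun p => hgP_joint p.1 p.2
      rw [hrw]
      refine continuousOn_pi.2 fun i => ?_
      exact ((hP.continuous_fderiv one_ne_zero).comp_continuousOn
        (hcF.prodMk continuousOn_fst)).clm_apply continuousOn_const
    have hfcU := hRcomp.uniformContinuousOn_of_continuous hfcJ
    have hgPU := hRcomp.uniformContinuousOn_of_continuous hgPJ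
    rw [Metric.uniformContinuousOn_iff] at hfcU hgPU
    rw [hasDerivAt_iff_isLittleO, Asymptotics.isLittleO_iff]
    intro ε' hε'
    set Cb : ℝ := d * Cw + d * C₂ + 1 with hCbdef
    have hCb : (0:ℝ) < Cb := by positivity
    set εs : ℝ := ε' / Cb with hεsdef
    have hεs : (0:ℝ) < εs := div_pos hε' hCb
    obtain ⟨δf, hδf, hfcUε⟩ := hfcU εs hεs
    obtain ⟨δg, hδg, hgPUε⟩ := hgPU εs hεs
    have hδ0 : (0:ℝ) < min 1 (min δf δg) := lt_min one_pos (lt_min hδf hδg)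
    filter_upwards [Metric.ball_mem_nhds t₀ hδ0] with t htb
    have htd : |t - t₀| < min 1 (min δf δg) := by simpa [Real.dist_eq] using htb
    have htd1 : |t - t₀| ≤ 1 := le_of_lt (lt_of_lt_of_le htd (min_le_left _ _))
    have htdf : |t - t₀| < δf :=
      lt_of_lt_of_le htd (le_trans (min_le_right _ _) (min_le_left _ _))
    have htdg : |t - t₀| < δg :=
      lt_of_lt_of_le htd (le_trans (min_le_right _ _) (min_le_right _ _))
    have htJ : t ∈ Icc (-T) T := ht₀J t htd1
    have ht₀mem : t₀ ∈ Icc (-T) T := ht₀J t₀ (by simp)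
    have huIoc : ∀ τ, τ ∈ uIoc t₀ t → |τ - t₀| ≤ |t - t₀| := by
      intro τ hτ
      rcases mem_uIoc.1 hτ with h | h
      · rw [abs_of_pos (by linarith [h.1] : (0:ℝ) < τ - t₀)]
        have : 0 ≤ t - t₀ := by linarith [h.1, h.2]
        rw [abs_of_nonneg this]; linarith [h.2]
      · rw [abs_of_nonpos (by linarith [h.2] : τ - t₀ ≤ 0)]
        have : t - t₀ ≤ 0 := by linarith [h.1, h.2]
        rw [abs_of_nonpos this]; linarith [h.1]
    have he₁ : ∀ s ∈ Icc (0:ℝ) 1,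
        ‖(u (Q t (η s)) t - u (Q t₀ (η s)) t₀) + (t - t₀) • gP t₀ s‖ ≤ εs * |t - t₀| := by
      intro s hs
      have hrw : (u (Q t (η s)) t - u (Q t₀ (η s)) t₀) + (t - t₀) • gP t₀ s
          = ∫ τ in t₀..t, (gP t₀ s - gP τ s) := by
        rw [intervalIntegral.integral_sub intervalIntegrable_const
          ((hgP_t_cont s).intervalIntegrable _ _), intervalIntegral.integral_const,
          hT4 s t t₀, intervalIntegral.integral_neg]
        abel
      rw [hrw]
      have hbound : ∀ τ ∈ uIoc t₀ t, ‖gP t₀ s - gP τ s‖ ≤ εs := by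
        intro τ hτ
        have hττ : |τ - t₀| ≤ |t - t₀| := huIoc τ hτ
        have hmem1 : ((t₀ : ℝ), s) ∈ Icc (-T) T ×ˢ Icc (0:ℝ) 1 := ⟨ht₀mem, hs⟩
        have hmem2 : ((τ : ℝ), s) ∈ Icc (-T) T ×ˢ Icc (0:ℝ) 1 :=
          ⟨ht₀J τ (hττ.trans htd1), hs⟩
        have hdistp : dist ((t₀ : ℝ), s) ((τ : ℝ), s) < δg := by
          rw [Prod.dist_eq]
          simp only [dist_self]
          rw [max_eq_left dist_nonneg, Real.dist_eq]
          calc |t₀ - τ| = |τ - t₀| := abs_sub_comm _ _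
            _ ≤ |t - t₀| := hττ
            _ < δg := htdg
        have := hgPUε _ hmem1 _ hmem2 hdistp
        rw [dist_eq_norm] at this
        exact this.le
      have := intervalIntegral.norm_integral_le_of_norm_le_const hbound
      calc ‖∫ τ in t₀..t, (gP t₀ s - gP τ s)‖ ≤ εs * |t - t₀| := this
        _ ≤ εs * |t - t₀| := le_rfl
    have he₂ : ∀ s ∈ Icc (0:ℝ) 1,
        ‖(Q t (η s) - Q t₀ (η s)) - (t - t₀) • (u (Q t (η s)) t)‖ ≤ εs * |t - t₀| := by
      intro s hs
      have hrw : (Q t (η s) - Q t₀ (η s)) - (t - t₀) • (u (Q t (η s)) t)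
          = ∫ τ in t₀..t, (u (Q τ (η s)) τ - u (Q t (η s)) t) := by
        rw [intervalIntegral.integral_sub ((hfc_tc s).intervalIntegrable _ _)
          intervalIntegrable_const, intervalIntegral.integral_const, ← hT3 s t t₀]
      rw [hrw]
      have hbound : ∀ τ ∈ uIoc t₀ t, ‖u (Q τ (η s)) τ - u (Q t (η s)) t‖ ≤ εs := by
        intro τ hτ
        have hττ : |τ - t₀| ≤ |t - t₀| := huIoc τ hτ
        have hτt : |τ - t| ≤ |t - t₀| := by
          rcases mem_uIoc.1 hτ with h | h
          · rw [abs_of_nonpos (by linarith [h.2] : τ - t ≤ 0)]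
            have h3 : 0 ≤ t - t₀ := by linarith [h.1, h.2]
            rw [abs_of_nonneg h3]; linarith [h.1]
          · rw [abs_of_nonneg (by linarith [h.2] : 0 ≤ τ - t)]
            have h3 : t - t₀ ≤ 0 := by linarith [h.1, h.2]
            rw [abs_of_nonpos h3]; linarith [h.1]
        have hmem1 : ((τ : ℝ), s) ∈ Icc (-T) T ×ˢ Icc (0:ℝ) 1 :=
          ⟨ht₀J τ (hττ.trans htd1), hs⟩
        have hmem2 : ((t : ℝ), s) ∈ Icc (-T) T ×ˢ Icc (0:ℝ) 1 := ⟨htJ, hs⟩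
        have hdistp : dist ((τ : ℝ), s) ((t : ℝ), s) < δf := by
          rw [Prod.dist_eq]
          simp only [dist_self]
          rw [max_eq_left dist_nonneg, Real.dist_eq]
          exact lt_of_le_of_lt hτt htdf
        have := hfcUε _ hmem1 _ hmem2 hdistp
        rw [dist_eq_norm] at this
        exact this.le
      exact intervalIntegral.norm_integral_le_of_norm_le_const hbound
    -- splitting of the circulation difference
    have hcΔf : Continuous fun s => (u (Q t (η s)) t - u (Q t₀ (η s)) t₀) :=
      (hfc_cont t).sub (hfc_cont t₀)
    have hce₁ : Continuous fun s =>
        ((u (Q t (η s)) t - u (Q t₀ (η s)) t₀) + (t - t₀) • gP t₀ s) :=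
      hcΔf.add (continuous_const.fun_smul (hgP_cont t₀))
    have hce₂ : Continuous fun s =>
        ((Q t (η s) - Q t₀ (η s)) - (t - t₀) • (u (Q t (η s)) t)) :=
      ((hcc t).sub (hcc t₀)).sub (continuous_const.fun_smul (hfc_cont t))
    have hsplit : (∫ s in (0:ℝ)..1, (u (Q t (η s)) t) ⬝ᵥ w t s)
        - (∫ s in (0:ℝ)..1, (u (Q t₀ (η s)) t₀) ⬝ᵥ w t₀ s)
        = (∫ s in (0:ℝ)..1, (u (Q t (η s)) t - u (Q t₀ (η s)) t₀) ⬝ᵥ w t₀ s)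
          + (∫ s in (0:ℝ)..1, (u (Q t (η s)) t) ⬝ᵥ (w t s - w t₀ s)) := by
      rw [← intervalIntegral.integral_sub
        ((continuous_dot (hfc_cont t) (hw_cont t)).intervalIntegrable _ _)
        ((continuous_dot (hfc_cont t₀) (hw_cont t₀)).intervalIntegrable _ _),
        ← intervalIntegral.integral_add
        ((continuous_dot hcΔf (hw_cont t₀)).intervalIntegrable _ _)
        ((continuous_dot (hfc_cont t) ((hw_cont t).fun_sub (hw_cont t₀))).intervalIntegrable _ _)]
      apply intervalIntegral.integral_congr
      intro s _
      simp only [sub_dotProduct, dotProduct_sub]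
      ring
    -- the A term
    have hAeq : (∫ s in (0:ℝ)..1, (u (Q t (η s)) t - u (Q t₀ (η s)) t₀) ⬝ᵥ w t₀ s)
        = ∫ s in (0:ℝ)..1,
            (((u (Q t (η s)) t - u (Q t₀ (η s)) t₀) + (t - t₀) • gP t₀ s) ⬝ᵥ w t₀ s) := by
      have h1 : (fun s => (((u (Q t (η s)) t - u (Q t₀ (η s)) t₀) + (t - t₀) • gP t₀ s) ⬝ᵥ w t₀ s))
          = fun s => ((u (Q t (η s)) t - u (Q t₀ (η s)) t₀) ⬝ᵥ w t₀ s)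
            + (t - t₀) * (gP t₀ s ⬝ᵥ w t₀ s) := by
        funext s
        rw [add_dotProduct, smul_dotProduct]
        simp [smul_eq_mul]
      rw [h1, intervalIntegral.integral_add
        ((continuous_dot hcΔf (hw_cont t₀)).intervalIntegrable _ _)
        ((continuous_const.fun_mul (continuous_dot (hgP_cont t₀) (hw_cont t₀))).intervalIntegrable _ _),
        intervalIntegral.integral_const_mul, hI1 t₀, mul_zero, add_zero]
    have hAbound : |∫ s in (0:ℝ)..1,
        (((u (Q t (η s)) t - u (Q t₀ (η s)) t₀) + (t - t₀) • gP t₀ s) ⬝ᵥ w t₀ s)|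
        ≤ d * Cw * (εs * |t - t₀|) := by
      have hb : ∀ s ∈ uIoc (0:ℝ) 1,
          ‖(((u (Q t (η s)) t - u (Q t₀ (η s)) t₀) + (t - t₀) • gP t₀ s) ⬝ᵥ w t₀ s)‖
          ≤ d * (εs * |t - t₀|) * Cw := by
        intro s hsoc
        have hs : s ∈ Icc (0:ℝ) 1 := by
          rw [uIoc_of_le zero_le_one] at hsoc
          exact Ioc_subset_Icc_self hsoc
        rw [Real.norm_eq_abs]
        refine (abs_dotProduct_le _ _).trans ?_
        have h1 := he₁ s hs
        have h2 := hCw s hs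
        have hd0 : (0:ℝ) ≤ d := Nat.cast_nonneg d
        apply mul_le_mul (mul_le_mul_of_nonneg_left h1 hd0) h2 (norm_nonneg _)
        positivity
      have := intervalIntegral.norm_integral_le_of_norm_le_const hb
      rw [Real.norm_eq_abs] at this
      calc |∫ s in (0:ℝ)..1,
          (((u (Q t (η s)) t - u (Q t₀ (η s)) t₀) + (t - t₀) • gP t₀ s) ⬝ᵥ w t₀ s)|
          ≤ d * (εs * |t - t₀|) * Cw * |1 - 0| := this
        _ = d * Cw * (εs * |t - t₀|) := by simp; ring
    -- the B term
    have hBeq : (∫ s in (0:ℝ)..1, (u (Q t (η s)) t) ⬝ᵥ (w t s - w t₀ s))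
        = - ∫ s in (0:ℝ)..1,
            (wf t s ⬝ᵥ ((Q t (η s) - Q t₀ (η s)) - (t - t₀) • (u (Q t (η s)) t))) := by
      rw [hI3 t t₀]
      congr 1
      have h1 : (fun s => (wf t s ⬝ᵥ ((Q t (η s) - Q t₀ (η s)) - (t - t₀) • (u (Q t (η s)) t))))
          = fun s => (wf t s ⬝ᵥ (Q t (η s) - Q t₀ (η s)))
            - (t - t₀) * (u (Q t (η s)) t ⬝ᵥ wf t s) := by
        funext s
        rw [dotProduct_sub, dotProduct_smul]
        rw [dotProduct_comm (wf t s) (u (Q t (η s)) t)]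
        simp [smul_eq_mul]
      rw [h1, intervalIntegral.integral_sub
        ((continuous_dot (hwf_cont t) ((hcc t).fun_sub (hcc t₀))).intervalIntegrable _ _)
        ((continuous_const.fun_mul (continuous_dot (hfc_cont t) (hwf_cont t))).intervalIntegrable _ _),
        intervalIntegral.integral_const_mul, hI2 t, mul_zero, sub_zero]
    have hBbound : |∫ s in (0:ℝ)..1,
        (wf t s ⬝ᵥ ((Q t (η s) - Q t₀ (η s)) - (t - t₀) • (u (Q t (η s)) t)))|
        ≤ d * C₂ * (εs * |t - t₀|) := by
      have hb : ∀ s ∈ uIoc (0:ℝ) 1,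
          ‖(wf t s ⬝ᵥ ((Q t (η s) - Q t₀ (η s)) - (t - t₀) • (u (Q t (η s)) t)))‖
          ≤ d * C₂ * (εs * |t - t₀|) := by
        intro s hsoc
        have hs : s ∈ Icc (0:ℝ) 1 := by
          rw [uIoc_of_le zero_le_one] at hsoc
          exact Ioc_subset_Icc_self hsoc
        rw [Real.norm_eq_abs]
        refine (abs_dotProduct_le _ _).trans ?_
        have h1 := he₂ s hs
        have h2 := hwf_bound t htJ s hs
        have hd0 : (0:ℝ) ≤ d := Nat.cast_nonneg d
        apply mul_le_mul (mul_le_mul_of_nonneg_left h2 hd0) h1 (norm_nonneg _)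
        positivity
      have := intervalIntegral.norm_integral_le_of_norm_le_const hb
      rw [Real.norm_eq_abs] at this
      calc |∫ s in (0:ℝ)..1,
          (wf t s ⬝ᵥ ((Q t (η s) - Q t₀ (η s)) - (t - t₀) • (u (Q t (η s)) t)))|
          ≤ d * C₂ * (εs * |t - t₀|) * |1 - 0| := this
        _ = d * C₂ * (εs * |t - t₀|) := by simp
    -- conclusion
    simp only [smul_zero, sub_zero]
    rw [Real.norm_eq_abs, Real.norm_eq_abs]
    rw [hsplit, hAeq, hBeq]
    have htotal : |(∫ s in (0:ℝ)..1,
          (((u (Q t (η s)) t - u (Q t₀ (η s)) t₀) + (t - t₀) • gP t₀ s) ⬝ᵥ w t₀ s))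
        + -(∫ s in (0:ℝ)..1,
            (wf t s ⬝ᵥ ((Q t (η s) - Q t₀ (η s)) - (t - t₀) • (u (Q t (η s)) t))))|
        ≤ d * Cw * (εs * |t - t₀|) + d * C₂ * (εs * |t - t₀|) := by
      refine (abs_add_le _ _).trans ?_
      rw [abs_neg]
      exact add_le_add hAbound hBbound
    refine htotal.trans ?_
    have hfinal : d * Cw * (εs * |t - t₀|) + d * C₂ * (εs * |t - t₀|)
        = (d * Cw + d * C₂) * εs * |t - t₀| := by ring
    rw [hfinal]
    have hle : (d * Cw + d * C₂) * εs ≤ ε' := by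
      have h1 : (d * Cw + d * C₂) * εs ≤ Cb * εs := by
        apply mul_le_mul_of_nonneg_right _ hεs.le
        rw [hCbdef]; linarith
      refine h1.trans ?_
      rw [hεsdef]
      rw [mul_div_cancel₀ _ (ne_of_gt hCb)]
    exact mul_le_mul_of_nonneg_right hle (abs_nonneg _)
  exact is_const_of_deriv_eq_zero (fun t => (hkey t).differentiableAt)
    (fun t => (hkey t).deriv) t₁ t₂
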